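/- The iterated sum Σ_{ℓ_5 = 5}^{∞} ( Σ_{ℓ_4 = 4}^{ℓ_5 - 1} ( Σ_{ℓ_3 = 3}^{ℓ_4 - 1} ( Σ_{ℓ_2 = 2}^{ℓ_3 - 1} ( Σ_{ℓ_1 = 1}^{ℓ_2 - 1} 1/(ℓ_1² · ℓ_2² · ℓ_3² · ℓ_4² · ℓ_5²) ) ) ) ) converges and equals π^{10} / 11!. -/

import Mathlib

open Real Filter Topology

noncomputable def c : ℕ → ℕ → ℝ
  | 0 => fun _ => 1
  | n+1 => fun N => ∑ ℓ ∈ Finset.Icc 1 N, c n (ℓ - 1) / (ℓ : ℝ) ^ 2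

lemma c_zero (N : ℕ) : c 0 N = 1 := rfl

lemma c_succ (n N : ℕ) : c (n+1) N = ∑ ℓ ∈ Finset.Icc 1 N, c n (ℓ - 1) / (ℓ : ℝ) ^ 2 := rfl

lemma c_nonneg : ∀ n N, 0 ≤ c n N := by
  intro n
  induction n with
  | zero => intro N; rw [c_zero]; norm_num
  | succ n ih =>
    intro N
    rw [c_succ]
    exact Finset.sum_nonneg fun ℓ _ => div_nonneg (ih _) (by positivity)

lemma c_eq_zero : ∀ n N, N < n → c n N = 0 := by
  intro n
  induction n with
  | zero => omega
  | succ n ih =>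
    intro N hN
    rw [c_succ]
    apply Finset.sum_eq_zero
    intro ℓ hℓ
    rw [Finset.mem_Icc] at hℓ
    rw [ih (ℓ - 1) (by omega), zero_div]

lemma H2_le (N : ℕ) : ∑ ℓ ∈ Finset.Icc 1 N, 1 / (ℓ:ℝ)^2 ≤ 2 - 1/(N:ℝ) := by
  induction N with
  | zero => simp
  | succ N ih =>
    rw [Finset.sum_Icc_succ_top (by omega)]
    rcases Nat.eq_zero_or_pos N with h | h
    · subst h; norm_num
    · have h1 : (1:ℝ) ≤ (N:ℝ) := by exact_mod_cast h
      have key : 1 / ((N:ℝ)+1)^2 ≤ 1/(N:ℝ) - 1/((N:ℝ)+1) := by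
        rw [div_sub_div _ _ (by positivity) (by positivity)]
        rw [div_le_div_iff₀ (by positivity) (by positivity)]
        ring_nf
        nlinarith
      push_cast
      linarith

lemma c_le : ∀ n N, c n N ≤ 2 ^ n := by
  intro n
  induction n with
  | zero => intro N; rw [c_zero]; norm_num
  | succ n ih =>
    intro N
    rw [c_succ]
    have : ∀ ℓ ∈ Finset.Icc 1 N, c n (ℓ-1) / (ℓ:ℝ)^2 ≤ 2^n * (1/(ℓ:ℝ)^2) := by
      intro ℓ hℓ
      rw [Finset.mem_Icc] at hℓ
      have hℓ0 : (0:ℝ) < (ℓ:ℝ)^2 := by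
        have : 0 < ℓ := by omega
        positivity
      rw [mul_one_div, div_le_div_iff₀ hℓ0 hℓ0]
      exact mul_le_mul_of_nonneg_right (ih _) (le_of_lt hℓ0)
    calc ∑ ℓ ∈ Finset.Icc 1 N, c n (ℓ-1) / (ℓ:ℝ)^2
        ≤ ∑ ℓ ∈ Finset.Icc 1 N, 2^n * (1/(ℓ:ℝ)^2) := Finset.sum_le_sum this
      _ = 2^n * ∑ ℓ ∈ Finset.Icc 1 N, 1/(ℓ:ℝ)^2 := by rw [Finset.mul_sum]
      _ ≤ 2^n * 2 := by
          apply mul_le_mul_of_nonneg_left _ (by positivity)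
          have := H2_le N
          have : 0 ≤ 1/(N:ℝ) := by positivity
          linarith [H2_le N]
      _ = 2^(n+1) := by ring

lemma c_succ_range (n N : ℕ) :
    c (n+1) N = ∑ i ∈ Finset.range N, c n i / ((i:ℝ)+1)^2 := by
  rw [c_succ, ← Finset.Ico_add_one_right_eq_Icc, Finset.sum_Ico_eq_sum_range]
  simp only [Nat.add_sub_cancel, Nat.succ_sub_one]
  apply Finset.sum_congr rfl
  intro i _
  congr 2
  · omega
  · push_cast; ring

lemma summable_base : Summable (fun i : ℕ => 1 / ((i:ℝ)+1)^2) := by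
  have h : Summable (fun n : ℕ => 1 / (n:ℝ)^2) := summable_one_div_nat_pow.mpr one_lt_two
  have := (summable_nat_add_iff 1).mpr h
  apply this.congr
  intro i
  push_cast
  ring_nf

lemma summable_caux (n : ℕ) : Summable (fun i : ℕ => c n i / ((i:ℝ)+1)^2) := by
  apply Summable.of_nonneg_of_le
    (fun i => div_nonneg (c_nonneg n i) (by positivity))
    (fun i => ?_) ((summable_base).mul_left (2^n))
  rw [div_eq_mul_one_div]
  exact mul_le_mul_of_nonneg_right (c_le n i) (by positivity)

noncomputable def e : ℕ → ℝ
  | 0 => 1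
  | n+1 => ∑' i : ℕ, c n i / ((i:ℝ)+1)^2

lemma tendsto_c (n : ℕ) : Tendsto (fun N => c n N) atTop (𝓝 (e n)) := by
  cases n with
  | zero =>
    simp only [c_zero]
    exact tendsto_const_nhds
  | succ n =>
    have h := (summable_caux n).hasSum.tendsto_sum_nat
    apply h.congr
    intro N
    rw [c_succ_range]

lemma e_nonneg (n : ℕ) : 0 ≤ e n := ge_of_tendsto' (tendsto_c n) (fun N => c_nonneg n N)

lemma e_le (n : ℕ) : e n ≤ 2 ^ n := le_of_tendsto' (tendsto_c n) (fun N => c_le n N)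

lemma prod_eq (x : ℝ) : ∀ N : ℕ, ∏ k ∈ Finset.Icc 1 N, (1 - x^2/(k:ℝ)^2)
    = ∑ n ∈ Finset.range (N+1), (-1)^n * c n N * x^(2*n) := by
  intro N
  induction N with
  | zero => simp [c_zero]
  | succ N ih =>
    have key : ∀ m, c (m+1) (N+1) = c (m+1) N + c m N / ((N:ℝ)+1)^2 := by
      intro m
      rw [c_succ, c_succ, Finset.sum_Icc_succ_top (by omega)]
      push_cast
      simp only [Nat.add_sub_cancel]
    rw [Finset.prod_Icc_succ_top (by omega), ih]
    rw [Finset.sum_range_succ' (fun n => (-1:ℝ)^n * c n (N+1) * x^(2*n)) (N+1)]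
    have hterm : ∀ i, (-1:ℝ)^(i+1) * c (i+1) (N+1) * x^(2*(i+1))
        = (-1:ℝ)^(i+1) * c (i+1) N * x^(2*(i+1))
          - ((-1:ℝ)^i * c i N * x^(2*i)) * (x^2/((N:ℝ)+1)^2) := by
      intro i
      rw [key i]
      have h2 : x^(2*(i+1)) = x^(2*i) * x^2 := by rw [← pow_add]; ring_nf
      rw [h2, pow_succ]
      have hN : ((N:ℝ)+1)^2 ≠ 0 := by positivity
      field_simp
      ring
    rw [Finset.sum_congr rfl (fun i _ => hterm i), Finset.sum_sub_distrib]
    have hA : ∑ i ∈ Finset.range (N+1), (-1:ℝ)^(i+1) * c (i+1) N * x^(2*(i+1))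
        + (-1:ℝ)^0 * c 0 (N+1) * x^(2*0)
        = ∑ n ∈ Finset.range (N+1), (-1:ℝ)^n * c n N * x^(2*n) := by
      have := (Finset.sum_range_succ' (fun n => (-1:ℝ)^n * c n N * x^(2*n)) (N+1)).symm
      rw [c_zero]
      have hz : c 0 N = 1 := c_zero N
      calc ∑ i ∈ Finset.range (N+1), (-1:ℝ)^(i+1) * c (i+1) N * x^(2*(i+1))
          + (-1:ℝ)^0 * 1 * x^(2*0)
          = ∑ i ∈ Finset.range (N+1), (-1:ℝ)^(i+1) * c (i+1) N * x^(2*(i+1))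
            + (-1:ℝ)^0 * c 0 N * x^(2*0) := by rw [hz]
        _ = ∑ n ∈ Finset.range (N+2), (-1:ℝ)^n * c n N * x^(2*n) := by
            rw [Finset.sum_range_succ' (fun n => (-1:ℝ)^n * c n N * x^(2*n)) (N+1)]
        _ = ∑ n ∈ Finset.range (N+1), (-1:ℝ)^n * c n N * x^(2*n)
            + (-1:ℝ)^(N+1) * c (N+1) N * x^(2*(N+1)) := by
            rw [Finset.sum_range_succ]
        _ = ∑ n ∈ Finset.range (N+1), (-1:ℝ)^n * c n N * x^(2*n) := by
            rw [c_eq_zero (N+1) N (by omega)]; ring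
    have hB : ∑ i ∈ Finset.range (N+1), ((-1:ℝ)^i * c i N * x^(2*i)) * (x^2/((N:ℝ)+1)^2)
        = (∑ n ∈ Finset.range (N+1), (-1:ℝ)^n * c n N * x^(2*n)) * (x^2/((N:ℝ)+1)^2) := by
      rw [Finset.sum_mul]
    push_cast
    rw [hB]
    linear_combination -hA

lemma tendsto_partial (x : ℝ) (hx : 2 * x^2 < 1) :
    Tendsto (fun N => ∑ n ∈ Finset.range (N+1), (-1:ℝ)^n * c n N * x^(2*n)) atTop
      (𝓝 (∑' n : ℕ, (-1:ℝ)^n * e n * x^(2*n))) := by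
  have hbound : Summable (fun n : ℕ => (2 * x^2)^n) :=
    summable_geometric_of_lt_one (by positivity) hx
  have hmain := tendsto_tsum_of_dominated_convergence (𝓕 := atTop)
    (f := fun N n => (-1:ℝ)^n * c n N * x^(2*n))
    (g := fun n => (-1:ℝ)^n * e n * x^(2*n))
    (bound := fun n => (2 * x^2)^n) hbound
    (fun n => ?_) ?_
  · apply hmain.congr
    intro N
    apply (tsum_eq_sum (s := Finset.range (N+1)) ?_)
    intro n hn
    rw [Finset.mem_range, not_lt] at hn
    show (-1:ℝ)^n * c n N * x^(2*n) = 0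
    rw [c_eq_zero n N (by omega)]
    ring
  · have : Tendsto (fun N => c n N) atTop (𝓝 (e n)) := tendsto_c n
    have h2 := this.const_mul ((-1:ℝ)^n)
    have h3 := h2.mul_const (x^(2*n))
    apply h3.congr
    intro N; ring
  · filter_upwards with N
    intro n
    have h1 : |(-1:ℝ)^n * c n N * x^(2*n)| = c n N * x^(2*n) := by
      rw [abs_mul, abs_mul, abs_pow, abs_neg, abs_one, one_pow, one_mul,
        abs_of_nonneg (c_nonneg n N), abs_of_nonneg (by rw [pow_mul]; positivity)]
    rw [Real.norm_eq_abs, h1, mul_pow, ← pow_mul]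
    exact mul_le_mul_of_nonneg_right (c_le n N) (by rw [pow_mul]; positivity)

lemma prod_Icc_eq_range (x : ℝ) (N : ℕ) :
    ∏ j ∈ Finset.range N, ((1:ℝ) - x^2/((j:ℝ)+1)^2) = ∏ k ∈ Finset.Icc 1 N, (1 - x^2/(k:ℝ)^2) := by
  induction N with
  | zero => simp
  | succ N ih =>
    rw [Finset.prod_range_succ, Finset.prod_Icc_succ_top (by omega), ih]
    push_cast
    ring

lemma g_eq_sinc (x : ℝ) (hx : 2 * x^2 < 1) :
    π * x * ∑' n : ℕ, (-1:ℝ)^n * e n * x^(2*n) = Real.sin (π * x) := by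
  have h1 := Real.tendsto_euler_sin_prod x
  have h2 : Tendsto (fun N : ℕ => π * x * ∏ j ∈ Finset.range N, ((1:ℝ) - x^2/((j:ℝ)+1)^2))
      atTop (𝓝 (π * x * ∑' n : ℕ, (-1:ℝ)^n * e n * x^(2*n))) := by
    have h3 := (tendsto_partial x hx).const_mul (π * x)
    apply h3.congr
    intro N
    rw [prod_Icc_eq_range, _root_.prod_eq]
  exact tendsto_nhds_unique h2 h1

lemma h_eq_sinc (x : ℝ) :
    π * x * ∑' n : ℕ, (-1:ℝ)^n * (π^(2*n) / (Nat.factorial (2*n+1) : ℝ)) * x^(2*n)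
      = Real.sin (π * x) := by
  have h1 := Real.hasSum_sin (π * x)
  rw [← h1.tsum_eq, ← tsum_mul_left]
  congr 1
  funext n
  rw [mul_pow, pow_succ, pow_succ]
  ring

lemma series_unique (D : ℕ → ℝ) (M C : ℝ) (hM : 0 < M) (hC : 1 ≤ C)
    (hD : ∀ n, |D n| ≤ M * C^n) (δ : ℝ) (hδ : 0 < δ)
    (h : ∀ t : ℝ, 0 < t → t < δ → ∑' n : ℕ, D n * t^n = 0) :
    ∀ n, D n = 0 := by
  intro n
  induction n using Nat.strong_induction_on with
  | _ n ih =>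
    have hC0 : (0:ℝ) < C := lt_of_lt_of_le one_pos hC
    have key : ∀ ε > 0, |D n| ≤ ε := by
      intro ε hε
      set t := min (δ/2) (min (1/(2*C)) (ε/(2*M*C^(n+1)))) with ht_def
      have ht0 : 0 < t := by
        apply lt_min (by positivity) (lt_min (by positivity) (by positivity))
      have htδ : t < δ := lt_of_le_of_lt (min_le_left _ _) (by linarith)
      have htC : C * t ≤ 1/2 := by
        have : t ≤ 1/(2*C) := le_trans (min_le_right _ _) (min_le_left _ _)
        rw [← le_div_iff₀' hC0]
        calc t ≤ 1/(2*C) := this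
          _ = 1/2/C := by ring
      have htε : 2 * (M * C^(n+1)) * t ≤ ε := by
        have : t ≤ ε/(2*M*C^(n+1)) := le_trans (min_le_right _ _) (min_le_right _ _)
        calc 2 * (M * C^(n+1)) * t ≤ 2 * (M * C^(n+1)) * (ε/(2*M*C^(n+1))) := by
              apply mul_le_mul_of_nonneg_left this (by positivity)
          _ = ε := by field_simp
      have hCt1 : C * t < 1 := lt_of_le_of_lt htC (by norm_num)
      have hgeo : Summable (fun m : ℕ => (C*t)^m) :=
        summable_geometric_of_lt_one (by positivity) hCt1
      have hsum : Summable (fun m : ℕ => D m * t^m) := by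
        apply Summable.of_norm_bounded (hgeo.mul_left M)
        intro m
        rw [Real.norm_eq_abs, abs_mul, mul_pow, abs_of_nonneg (pow_nonneg ht0.le m)]
        calc |D m| * t^m ≤ (M*C^m)*t^m :=
              mul_le_mul_of_nonneg_right (hD m) (by positivity)
          _ = M*(C^m*t^m) := by ring
      have h0 := h t ht0 htδ
      have hsplit := hsum.sum_add_tsum_nat_add n
      have hfin : ∑ i ∈ Finset.range n, D i * t^i = 0 :=
        Finset.sum_eq_zero (fun i hi => by
          rw [ih i (Finset.mem_range.mp hi)]; ring)
      rw [h0, hfin, zero_add] at hsplit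
      -- hsplit : ∑' m, D (m+n) * t^(m+n) = 0
      have hshift : Summable (fun m : ℕ => D (m+n) * t^m) := by
        apply Summable.of_norm_bounded
          (hgeo.mul_left (M*C^n))
        intro m
        rw [Real.norm_eq_abs, abs_mul]
        rw [abs_of_nonneg (a := t^m) (by positivity)]
        calc |D (m+n)| * t^m ≤ M * C^(m+n) * t^m := by
              apply mul_le_mul_of_nonneg_right (hD _) (by positivity)
          _ = (M*C^n) * (C*t)^m := by rw [pow_add, mul_pow]; ring
      have hA : t^n * ∑' m : ℕ, D (m+n) * t^m = 0 := by
        rw [← tsum_mul_left]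
        rw [← hsplit]
        congr 1
        funext m
        rw [pow_add]
        ring
      have htn : (t:ℝ)^n ≠ 0 := by positivity
      have hA0 : ∑' m : ℕ, D (m+n) * t^m = 0 := by
        rcases mul_eq_zero.mp hA with h' | h'
        · exact absurd h' htn
        · exact h'
      have hzero := hshift.tsum_eq_zero_add
      rw [hA0, pow_zero, mul_one, Nat.zero_add] at hzero
      -- hzero : 0 = D n + ∑' m, D (m+1+n) * t^(m+1)
      have hDn : D n = - ∑' m : ℕ, D (m+1+n) * t^(m+1) := by linarith [hzero]
      have hgb : Summable (fun m : ℕ => M*C^(n+1)*t*(C*t)^m) := hgeo.mul_left _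
      have hb : ∀ m : ℕ, ‖D (m+1+n) * t^(m+1)‖ ≤ M*C^(n+1)*t*(C*t)^m := by
        intro m
        rw [Real.norm_eq_abs, abs_mul, abs_of_nonneg (pow_nonneg ht0.le _)]
        calc |D (m+1+n)| * t^(m+1) ≤ (M * C^(m+1+n)) * t^(m+1) :=
              mul_le_mul_of_nonneg_right (hD _) (by positivity)
          _ = M*C^(n+1)*t*(C*t)^m := by
              rw [pow_add, pow_add, pow_add, mul_pow]
              ring
      have hsn : Summable (fun m : ℕ => ‖D (m+1+n) * t^(m+1)‖) :=
        Summable.of_nonneg_of_le (fun m => norm_nonneg _) hb hgb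
      have habs : |D n| ≤ ∑' m : ℕ, M*C^(n+1)*t*(C*t)^m := by
        rw [hDn, abs_neg, ← Real.norm_eq_abs]
        exact le_trans (norm_tsum_le_tsum_norm hsn) (Summable.tsum_le_tsum hb hsn hgb)
      rw [tsum_mul_left, tsum_geometric_of_lt_one (by positivity) hCt1] at habs
      have h12 : (1:ℝ)/2 ≤ 1 - C*t := by linarith
      have hinv : (1 - C*t)⁻¹ ≤ 2 := by
        rw [← one_div]
        calc 1/(1-C*t) ≤ 1/(1/2) := one_div_le_one_div_of_le (by norm_num) h12
          _ = 2 := by norm_num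
      calc |D n| ≤ M*C^(n+1)*t*(1-C*t)⁻¹ := habs
        _ ≤ M*C^(n+1)*t*2 := mul_le_mul_of_nonneg_left hinv (by positivity)
        _ = 2*(M*C^(n+1))*t := by ring
        _ ≤ ε := htε
    by_contra hne
    have h1 := key (|D n|/2) (by positivity)
    have h2 : 0 < |D n| := abs_pos.mpr hne
    linarith

lemma pi_sq_le_ten : π^2 ≤ 10 := by
  nlinarith [Real.pi_lt_d2, Real.pi_pos]

lemma e_eq (n : ℕ) : e n = π^(2*n) / (Nat.factorial (2*n+1) : ℝ) := by
  set D : ℕ → ℝ := fun m => (-1)^m * (e m - π^(2*m)/(Nat.factorial (2*m+1) : ℝ)) with hD_def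
  have hfact : ∀ m : ℕ, (1:ℝ) ≤ (Nat.factorial (2*m+1) : ℝ) := by
    intro m
    exact_mod_cast Nat.one_le_iff_ne_zero.mpr (Nat.factorial_ne_zero _)
  have hBpos : ∀ m : ℕ, 0 ≤ π^(2*m)/(Nat.factorial (2*m+1) : ℝ) := by
    intro m
    positivity
  have hBle : ∀ m : ℕ, π^(2*m)/(Nat.factorial (2*m+1) : ℝ) ≤ 10^m := by
    intro m
    calc π^(2*m)/(Nat.factorial (2*m+1) : ℝ) ≤ π^(2*m) :=
          div_le_self (by positivity) (hfact m)
      _ = (π^2)^m := by rw [← pow_mul]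
      _ ≤ 10^m := pow_le_pow_left₀ (by positivity) pi_sq_le_ten m
  have hD : ∀ m, |D m| ≤ 2 * 10^m := by
    intro m
    rw [hD_def]
    simp only
    rw [abs_mul, abs_pow, abs_neg, abs_one, one_pow, one_mul]
    have h1 : |e m - π^(2*m)/(Nat.factorial (2*m+1) : ℝ)|
        ≤ e m + π^(2*m)/(Nat.factorial (2*m+1) : ℝ) := by
      rw [abs_sub_comm]
      calc |π^(2*m)/(Nat.factorial (2*m+1) : ℝ) - e m|
          ≤ |π^(2*m)/(Nat.factorial (2*m+1) : ℝ)| + |e m| := abs_sub _ _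
        _ = π^(2*m)/(Nat.factorial (2*m+1) : ℝ) + e m := by
            rw [abs_of_nonneg (hBpos m), abs_of_nonneg (e_nonneg m)]
        _ = e m + π^(2*m)/(Nat.factorial (2*m+1) : ℝ) := by ring
    calc |e m - π^(2*m)/(Nat.factorial (2*m+1) : ℝ)|
        ≤ e m + π^(2*m)/(Nat.factorial (2*m+1) : ℝ) := h1
      _ ≤ 2^m + 10^m := add_le_add (e_le m) (hBle m)
      _ ≤ 10^m + 10^m := by
          have : (2:ℝ)^m ≤ 10^m := pow_le_pow_left₀ (by norm_num) (by norm_num) m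
          linarith
      _ = 2 * 10^m := by ring
  have hzero : ∀ t : ℝ, 0 < t → t < 1/20 → ∑' m : ℕ, D m * t^m = 0 := by
    intro t ht0 htδ
    set x := Real.sqrt t with hx_def
    have hx2 : x^2 = t := Real.sq_sqrt ht0.le
    have hx0 : 0 < x := Real.sqrt_pos.mpr ht0
    have h2x : 2 * x^2 < 1 := by rw [hx2]; linarith
    have hA : Summable (fun m : ℕ => (-1:ℝ)^m * e m * x^(2*m)) := by
      apply Summable.of_norm_bounded (g := fun m => (2*t)^m)
        (summable_geometric_of_lt_one (by positivity) (by linarith))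
      intro m
      rw [Real.norm_eq_abs, abs_mul, abs_mul, abs_pow, abs_neg, abs_one, one_pow, one_mul,
        abs_of_nonneg (e_nonneg m), pow_mul, hx2, abs_of_nonneg (by positivity), mul_pow]
      exact mul_le_mul_of_nonneg_right (e_le m) (by positivity)
    have hB : Summable (fun m : ℕ => (-1:ℝ)^m * (π^(2*m)/(Nat.factorial (2*m+1) : ℝ)) * x^(2*m)) := by
      apply Summable.of_norm_bounded (g := fun m => (10*t)^m)
        (summable_geometric_of_lt_one (by positivity) (by linarith))
      intro m
      rw [Real.norm_eq_abs, abs_mul, abs_mul, abs_pow, abs_neg, abs_one, one_pow, one_mul,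
        abs_of_nonneg (hBpos m), pow_mul x 2 m, hx2, abs_of_nonneg (by positivity), mul_pow]
      exact mul_le_mul_of_nonneg_right (hBle m) (by positivity)
    have hgs := g_eq_sinc x h2x
    have hhs := h_eq_sinc x
    have hne : π * x ≠ 0 := by positivity
    have heq : ∑' m : ℕ, (-1:ℝ)^m * e m * x^(2*m)
        = ∑' m : ℕ, (-1:ℝ)^m * (π^(2*m)/(Nat.factorial (2*m+1) : ℝ)) * x^(2*m) :=
      mul_left_cancel₀ hne (hgs.trans hhs.symm)
    have : ∑' m : ℕ, D m * t^m
        = ∑' m : ℕ, ((-1:ℝ)^m * e m * x^(2*m)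
            - (-1:ℝ)^m * (π^(2*m)/(Nat.factorial (2*m+1) : ℝ)) * x^(2*m)) := by
      congr 1
      funext m
      rw [hD_def]
      simp only
      rw [pow_mul x 2 m, hx2]
      ring
    rw [this, hA.tsum_sub hB, heq, sub_self]
  have := series_unique D 2 10 (by norm_num) (by norm_num) hD (1/20) (by norm_num) hzero n
  rw [hD_def] at this
  simp only at this
  have hpow : ((-1:ℝ))^n ≠ 0 := by
    apply pow_ne_zero; norm_num
  have := (mul_eq_zero.mp this).resolve_left hpow
  linarith [this]

lemma hstep (n k M : ℕ) (hk : k = n + 1) (r : ℝ) :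
    ∑ ℓ ∈ Finset.Icc k M, (c n (ℓ-1) / (ℓ:ℝ)^2) / r = c k M / r := by
  subst hk
  rw [c_succ, Finset.sum_div]
  apply Finset.sum_subset (Finset.Icc_subset_Icc_left (by omega))
  intro ℓ h1 h2
  rw [Finset.mem_Icc] at h1 h2
  rw [c_eq_zero n (ℓ-1) (by omega), zero_div, zero_div]

lemma inner_eq (m : ℕ) :
    (∑ ℓ₄ ∈ Finset.Icc 4 (m - 1), ∑ ℓ₃ ∈ Finset.Icc 3 (ℓ₄ - 1),
      ∑ ℓ₂ ∈ Finset.Icc 2 (ℓ₃ - 1), ∑ ℓ₁ ∈ Finset.Icc 1 (ℓ₂ - 1),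
        1 / ((ℓ₁:ℝ)^2 * (ℓ₂:ℝ)^2 * (ℓ₃:ℝ)^2 * (ℓ₄:ℝ)^2 * (m:ℝ)^2))
      = c 4 (m-1) / (m:ℝ)^2 := by
  have L1 : ∀ ℓ₂ ℓ₃ ℓ₄ : ℕ, (∑ ℓ₁ ∈ Finset.Icc 1 (ℓ₂-1),
      1 / ((ℓ₁:ℝ)^2 * (ℓ₂:ℝ)^2 * (ℓ₃:ℝ)^2 * (ℓ₄:ℝ)^2 * (m:ℝ)^2))
      = (c 1 (ℓ₂-1) / (ℓ₂:ℝ)^2) / ((ℓ₃:ℝ)^2 * ((ℓ₄:ℝ)^2 * (m:ℝ)^2)) := by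
    intro ℓ₂ ℓ₃ ℓ₄
    have h := hstep 0 1 (ℓ₂-1) rfl ((ℓ₂:ℝ)^2 * ((ℓ₃:ℝ)^2 * ((ℓ₄:ℝ)^2 * (m:ℝ)^2)))
    calc ∑ ℓ₁ ∈ Finset.Icc 1 (ℓ₂-1),
          1 / ((ℓ₁:ℝ)^2 * (ℓ₂:ℝ)^2 * (ℓ₃:ℝ)^2 * (ℓ₄:ℝ)^2 * (m:ℝ)^2)
        = ∑ ℓ₁ ∈ Finset.Icc 1 (ℓ₂-1), (c 0 (ℓ₁-1) / (ℓ₁:ℝ)^2)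
            / ((ℓ₂:ℝ)^2 * ((ℓ₃:ℝ)^2 * ((ℓ₄:ℝ)^2 * (m:ℝ)^2))) :=
          Finset.sum_congr rfl (fun ℓ₁ _ => by rw [c_zero]; ring)
      _ = c 1 (ℓ₂-1) / ((ℓ₂:ℝ)^2 * ((ℓ₃:ℝ)^2 * ((ℓ₄:ℝ)^2 * (m:ℝ)^2))) := h
      _ = (c 1 (ℓ₂-1) / (ℓ₂:ℝ)^2) / ((ℓ₃:ℝ)^2 * ((ℓ₄:ℝ)^2 * (m:ℝ)^2)) := by ring
  have L2 : ∀ ℓ₃ ℓ₄ : ℕ, (∑ ℓ₂ ∈ Finset.Icc 2 (ℓ₃-1),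
      (c 1 (ℓ₂-1) / (ℓ₂:ℝ)^2) / ((ℓ₃:ℝ)^2 * ((ℓ₄:ℝ)^2 * (m:ℝ)^2)))
      = (c 2 (ℓ₃-1) / (ℓ₃:ℝ)^2) / ((ℓ₄:ℝ)^2 * (m:ℝ)^2) := by
    intro ℓ₃ ℓ₄
    exact (hstep 1 2 (ℓ₃-1) rfl _).trans (by ring)
  have L3 : ∀ ℓ₄ : ℕ, (∑ ℓ₃ ∈ Finset.Icc 3 (ℓ₄-1),
      (c 2 (ℓ₃-1) / (ℓ₃:ℝ)^2) / ((ℓ₄:ℝ)^2 * (m:ℝ)^2))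
      = (c 3 (ℓ₄-1) / (ℓ₄:ℝ)^2) / (m:ℝ)^2 := by
    intro ℓ₄
    exact (hstep 2 3 (ℓ₄-1) rfl _).trans (by ring)
  calc (∑ ℓ₄ ∈ Finset.Icc 4 (m - 1), ∑ ℓ₃ ∈ Finset.Icc 3 (ℓ₄ - 1),
      ∑ ℓ₂ ∈ Finset.Icc 2 (ℓ₃ - 1), ∑ ℓ₁ ∈ Finset.Icc 1 (ℓ₂ - 1),
        1 / ((ℓ₁:ℝ)^2 * (ℓ₂:ℝ)^2 * (ℓ₃:ℝ)^2 * (ℓ₄:ℝ)^2 * (m:ℝ)^2))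
      = ∑ ℓ₄ ∈ Finset.Icc 4 (m - 1), (c 3 (ℓ₄-1) / (ℓ₄:ℝ)^2) / (m:ℝ)^2 := by
        apply Finset.sum_congr rfl
        intro ℓ₄ _
        rw [← L3 ℓ₄]
        apply Finset.sum_congr rfl
        intro ℓ₃ _
        rw [← L2 ℓ₃ ℓ₄]
        exact Finset.sum_congr rfl (fun ℓ₂ _ => L1 ℓ₂ ℓ₃ ℓ₄)
    _ = c 4 (m-1) / (m:ℝ)^2 := hstep 3 4 (m-1) rfl _

lemma F_summable : Summable (fun m : ℕ => c 4 (m-1) / (m:ℝ)^2) := by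
  apply Summable.of_nonneg_of_le
    (fun m => div_nonneg (c_nonneg _ _) (by positivity)) (fun m => ?_)
    ((summable_one_div_nat_pow.mpr one_lt_two).mul_left 16)
  rw [div_eq_mul_one_div]
  apply mul_le_mul_of_nonneg_right _ (by positivity)
  have h := c_le 4 (m-1)
  norm_num at h
  exact h

lemma F_eq_zero_of_lt {m : ℕ} (hm : m < 5) : c 4 (m-1) / (m:ℝ)^2 = 0 := by
  rw [c_eq_zero 4 (m-1) (by omega), zero_div]

lemma tsum_F : ∑' m : ℕ, c 4 (m-1) / (m:ℝ)^2 = e 5 := by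
  rw [F_summable.tsum_eq_zero_add]
  rw [show (e 5 : ℝ) = ∑' i : ℕ, c 4 i / ((i:ℝ)+1)^2 from rfl]
  rw [F_eq_zero_of_lt (by omega), zero_add]
  apply tsum_congr
  intro i
  rw [Nat.add_sub_cancel]
  push_cast
  ring_nf

theorem stmt_10 :
    Summable (fun ℓ₅ : {m : ℕ // 5 ≤ m} =>
        ∑ ℓ₄ ∈ Finset.Icc 4 ((ℓ₅ : ℕ) - 1), ∑ ℓ₃ ∈ Finset.Icc 3 (ℓ₄ - 1),
          ∑ ℓ₂ ∈ Finset.Icc 2 (ℓ₃ - 1), ∑ ℓ₁ ∈ Finset.Icc 1 (ℓ₂ - 1),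
            1 / ((ℓ₁ : ℝ) ^ 2 * (ℓ₂ : ℝ) ^ 2 * (ℓ₃ : ℝ) ^ 2 * (ℓ₄ : ℝ) ^ 2 *
              ((ℓ₅ : ℕ) : ℝ) ^ 2)) ∧
      ∑' ℓ₅ : {m : ℕ // 5 ≤ m},
          ∑ ℓ₄ ∈ Finset.Icc 4 ((ℓ₅ : ℕ) - 1), ∑ ℓ₃ ∈ Finset.Icc 3 (ℓ₄ - 1),
            ∑ ℓ₂ ∈ Finset.Icc 2 (ℓ₃ - 1), ∑ ℓ₁ ∈ Finset.Icc 1 (ℓ₂ - 1),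
              1 / ((ℓ₁ : ℝ) ^ 2 * (ℓ₂ : ℝ) ^ 2 * (ℓ₃ : ℝ) ^ 2 * (ℓ₄ : ℝ) ^ 2 *
                ((ℓ₅ : ℕ) : ℝ) ^ 2) =
        π ^ 10 / (Nat.factorial 11 : ℝ) := by
  have hsub : Summable ((fun m : ℕ => c 4 (m-1) / (m:ℝ)^2) ∘ ((↑) : {m : ℕ | 5 ≤ m} → ℕ)) :=
    F_summable.subtype {m : ℕ | 5 ≤ m}
  constructor
  · apply hsub.congr
    intro ⟨m, hm⟩
    exact (inner_eq m).symm
  · have h1 : ∑' ℓ₅ : {m : ℕ // 5 ≤ m},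
          (∑ ℓ₄ ∈ Finset.Icc 4 ((ℓ₅ : ℕ) - 1), ∑ ℓ₃ ∈ Finset.Icc 3 (ℓ₄ - 1),
            ∑ ℓ₂ ∈ Finset.Icc 2 (ℓ₃ - 1), ∑ ℓ₁ ∈ Finset.Icc 1 (ℓ₂ - 1),
              1 / ((ℓ₁ : ℝ) ^ 2 * (ℓ₂ : ℝ) ^ 2 * (ℓ₃ : ℝ) ^ 2 * (ℓ₄ : ℝ) ^ 2 *
                ((ℓ₅ : ℕ) : ℝ) ^ 2))
        = ∑' ℓ₅ : {m : ℕ | 5 ≤ m}, c 4 ((ℓ₅ : ℕ)-1) / ((ℓ₅ : ℕ):ℝ)^2 :=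
      tsum_congr (fun ⟨m, hm⟩ => inner_eq m)
    rw [h1, tsum_subtype {m : ℕ | 5 ≤ m} (fun m : ℕ => c 4 (m-1) / (m:ℝ)^2)]
    have h2 : Set.indicator {m : ℕ | 5 ≤ m} (fun m : ℕ => c 4 (m-1) / (m:ℝ)^2)
        = fun m : ℕ => c 4 (m-1) / (m:ℝ)^2 := by
      apply Set.indicator_eq_self.mpr
      intro m hm
      simp only [Function.mem_support, ne_eq] at hm
      by_contra hcon
      simp only [Set.mem_setOf_eq, not_le] at hcon
      exact hm (F_eq_zero_of_lt hcon)
    rw [h2, tsum_F, e_eq 5]
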